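/- Let P ⊂ ℝ^d be a finite nonempty set and let k ≥ 1 be an integer. Set m := ⌈(15/(16k))·|P|⌉. Then there exists q ∈ P such that cost(P,q,m) ≤ 2·cost(P,q',m) for every q' ∈ ℝ^d, where cost(P,x,m) denotes the minimum over all subsets S ⊆ P with |S| = m of ∑_{p∈S} ‖x − p‖₂ (equivalently, the sum of the m smallest Euclidean distances from x to points of P). In particular, P contains a (15/16k, 1/16, 2)-median of P. -/

import Mathlib

open scoped Classical

/-- `cost P x m` is the minimum of `∑_{p∈S} ‖x−p‖₂` over subsets `S ⊆ P` with `|S| = m`,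
i.e. the sum of the `m` smallest Euclidean distances from `x` to points of `P`. -/
noncomputable def cost {d : ℕ} (P : Finset (EuclideanSpace ℝ (Fin d)))
    (x : EuclideanSpace ℝ (Fin d)) (m : ℕ) : ℝ :=
  sInf ((fun S : Finset (EuclideanSpace ℝ (Fin d)) => ∑ p ∈ S, ‖x - p‖) ''
    {S : Finset (EuclideanSpace ℝ (Fin d)) | S ⊆ P ∧ S.card = m})

lemma cost_set_finite {d : ℕ} (P : Finset (EuclideanSpace ℝ (Fin d)))
    (x : EuclideanSpace ℝ (Fin d)) (m : ℕ) :
    ((fun S : Finset (EuclideanSpace ℝ (Fin d)) => ∑ p ∈ S, ‖x - p‖) ''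
      {S : Finset (EuclideanSpace ℝ (Fin d)) | S ⊆ P ∧ S.card = m}).Finite := by
  apply Set.Finite.image
  apply Set.Finite.subset P.powerset.finite_toSet
  intro S hS
  simp only [Finset.coe_powerset, Set.mem_preimage, Set.mem_powerset_iff, Finset.coe_subset]
  exact hS.1

lemma cost_le {d : ℕ} (P : Finset (EuclideanSpace ℝ (Fin d)))
    (x : EuclideanSpace ℝ (Fin d)) {m : ℕ} {S : Finset (EuclideanSpace ℝ (Fin d))}
    (hS : S ⊆ P) (hcard : S.card = m) :
    cost P x m ≤ ∑ p ∈ S, ‖x - p‖ := by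
  apply csInf_le (Set.Finite.bddBelow (cost_set_finite P x m))
  exact ⟨S, ⟨hS, hcard⟩, rfl⟩

lemma cost_attained {d : ℕ} (P : Finset (EuclideanSpace ℝ (Fin d)))
    (x : EuclideanSpace ℝ (Fin d)) {m : ℕ} (hm : m ≤ P.card) :
    ∃ S : Finset (EuclideanSpace ℝ (Fin d)), S ⊆ P ∧ S.card = m ∧
      cost P x m = ∑ p ∈ S, ‖x - p‖ := by
  obtain ⟨S, hS, hcard⟩ := Finset.exists_subset_card_eq hm
  have hne : ((fun S : Finset (EuclideanSpace ℝ (Fin d)) => ∑ p ∈ S, ‖x - p‖) ''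
      {S : Finset (EuclideanSpace ℝ (Fin d)) | S ⊆ P ∧ S.card = m}).Nonempty :=
    ⟨_, ⟨S, ⟨hS, hcard⟩, rfl⟩⟩
  obtain ⟨T, hT, hTeq⟩ := Set.Nonempty.csInf_mem hne (cost_set_finite P x m)
  exact ⟨T, hT.1, hT.2, hTeq.symm⟩

/-- With `m := ⌈(15/(16k))·|P|⌉`, there exists `q ∈ P` such that
`cost(P,q,m) ≤ 2·cost(P,q',m)` for every `q' ∈ ℝ^d`; i.e. `P` contains a
`(15/16k, 1/16, 2)`-median of itself. -/
theorem stmt_5 {d k : ℕ} (hk : 1 ≤ k) (P : Finset (EuclideanSpace ℝ (Fin d)))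
    (hP : P.Nonempty) :
    ∃ q ∈ P, ∀ q' : EuclideanSpace ℝ (Fin d),
      cost P q ⌈(15 / (16 * (k : ℝ))) * P.card⌉₊ ≤
        2 * cost P q' ⌈(15 / (16 * (k : ℝ))) * P.card⌉₊ := by
  set m := ⌈(15 / (16 * (k : ℝ))) * P.card⌉₊ with hm
  have hk' : (1 : ℝ) ≤ k := by exact_mod_cast hk
  have hcard1 : (1 : ℝ) ≤ P.card := by exact_mod_cast Finset.card_pos.mpr hP
  have hmP : m ≤ P.card := by
    rw [hm, Nat.ceil_le]
    calc 15 / (16 * (k : ℝ)) * P.card ≤ 1 * P.card := by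
          apply mul_le_mul_of_nonneg_right _ (by linarith)
          rw [div_le_one (by positivity)]
          linarith
      _ = P.card := one_mul _
  have hm1 : 1 ≤ m := by
    rw [hm]
    apply Nat.one_le_ceil_iff.mpr
    positivity
  obtain ⟨q, hqP, hqmin⟩ := P.exists_min_image (fun q => cost P q m) hP
  refine ⟨q, hqP, fun q' => ?_⟩
  obtain ⟨S, hSP, hScard, hSeq⟩ := cost_attained P q' hmP
  have hSne : S.Nonempty := Finset.card_pos.mp (hScard ▸ hm1)
  obtain ⟨p0, hp0S, hp0min⟩ := S.exists_min_image (fun p => ‖q' - p‖) hSne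
  have h1 : cost P q m ≤ cost P p0 m := hqmin p0 (hSP hp0S)
  have h2 : cost P p0 m ≤ ∑ p ∈ S, ‖p0 - p‖ := cost_le P p0 hSP hScard
  have h3 : ∑ p ∈ S, ‖p0 - p‖ ≤ ∑ p ∈ S, (‖q' - p0‖ + ‖q' - p‖) := by
    apply Finset.sum_le_sum
    intro p hp
    calc ‖p0 - p‖ = ‖(p0 - q') + (q' - p)‖ := congrArg norm (by abel)
      _ ≤ ‖p0 - q'‖ + ‖q' - p‖ := norm_add_le _ _
      _ = ‖q' - p0‖ + ‖q' - p‖ := by rw [norm_sub_rev]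
  have h4 : ∑ p ∈ S, (‖q' - p0‖ + ‖q' - p‖) ≤ 2 * ∑ p ∈ S, ‖q' - p‖ := by
    rw [Finset.sum_add_distrib, two_mul]
    apply add_le_add_left
    exact Finset.sum_le_sum fun p hp => hp0min p hp
  calc cost P q m ≤ ∑ p ∈ S, ‖p0 - p‖ := le_trans h1 h2
    _ ≤ 2 * ∑ p ∈ S, ‖q' - p‖ := le_trans h3 h4
    _ = 2 * cost P q' m := by rw [hSeq]
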